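/- arXiv:2410.14163 — 8 statements merged into one kernel-verified Lean document; each statement's English description precedes it below -/
import Mathlib

section
/- conv(S) = ⋂_{λ ∈ ℝ²} conv(S_λ); that is, the intersection over all aggregation weights λ ∈ ℝ² of the convex hulls of the aggregated sets equals the convex hull of S. -/
open Set

/-- The box `[0,1]³`. -/
def unitCube : Set (ℝ × ℝ × ℝ) :=
  {p | p.1 ∈ Icc (0:ℝ) 1 ∧ p.2.1 ∈ Icc (0:ℝ) 1 ∧ p.2.2 ∈ Icc (0:ℝ) 1}

/-- `S = {(x,y₁,y₂) ∈ [0,1]³ : x·y₁ = 1/2, x·y₂ = 1/2}`. -/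
def setS : Set (ℝ × ℝ × ℝ) :=
  {p ∈ unitCube | p.1 * p.2.1 = 1/2 ∧ p.1 * p.2.2 = 1/2}

/-- The aggregated set `S_λ` with weights `l = (λ₁, λ₂)`. -/
def setAgg (l : ℝ × ℝ) : Set (ℝ × ℝ × ℝ) :=
  {p ∈ unitCube | l.1 * (p.1 * p.2.1 - 1/2) + l.2 * (p.1 * p.2.2 - 1/2) = 0}

lemma convexK (c s r : ℝ) (hc : 0 < c) :
    Convex ℝ {q : ℝ × ℝ × ℝ | 0 < q.1 ∧ c ≤ q.1 * (s * q.2.1 + r * q.2.2)} := by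
  rintro ⟨x1, y1, z1⟩ ⟨hx1, h1⟩ ⟨x2, y2, z2⟩ ⟨hx2, h2⟩ a b ha hb hab
  simp only [mem_setOf_eq, Prod.smul_mk, Prod.mk_add_mk, smul_eq_mul] at *
  have hu1 : 0 < s * y1 + r * z1 := by nlinarith
  have hu2 : 0 < s * y2 + r * z2 := by nlinarith
  have hpos : 0 < a * x1 + b * x2 := by
    rcases lt_or_eq_of_le ha with h | h
    · nlinarith
    · have : b = 1 := by linarith
      nlinarith
  refine ⟨hpos, ?_⟩
  have h4 : 2 * c ≤ x1 * (s * y2 + r * z2) + x2 * (s * y1 + r * z1) := by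
    nlinarith [sq_nonneg (x1 * (s * y2 + r * z2) - x2 * (s * y1 + r * z1)),
      mul_pos hx1 hu2, mul_pos hx2 hu1]
  have hb' : b = 1 - a := by linarith
  subst hb'
  nlinarith [mul_nonneg (mul_nonneg ha ha) (sub_nonneg.mpr h1),
    mul_nonneg (mul_nonneg hb hb) (sub_nonneg.mpr h2),
    mul_nonneg (mul_nonneg ha hb) (by linarith :
      (0:ℝ) ≤ x1 * (s * y2 + r * z2) + x2 * (s * y1 + r * z1) - 2 * c)]

lemma convexH (s r d : ℝ) :
    Convex ℝ {q : ℝ × ℝ × ℝ | q.1 + s * q.2.1 + r * q.2.2 ≤ d} := by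
  rintro ⟨x1, y1, z1⟩ h1 ⟨x2, y2, z2⟩ h2 a b ha hb hab
  simp only [mem_setOf_eq, Prod.smul_mk, Prod.mk_add_mk, smul_eq_mul] at *
  have hb' : b = 1 - a := by linarith
  subst hb'
  nlinarith [mul_le_mul_of_nonneg_left h1 ha, mul_le_mul_of_nonneg_left h2 hb]

lemma convex_unitCube : Convex ℝ unitCube := by
  rintro ⟨x1, y1, z1⟩ ⟨⟨h1, h2⟩, ⟨h3, h4⟩, h5, h6⟩ ⟨x2, y2, z2⟩ ⟨⟨g1, g2⟩, ⟨g3, g4⟩, g5, g6⟩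
    a b ha hb hab
  simp only [unitCube, mem_setOf_eq, Prod.smul_mk, Prod.mk_add_mk, smul_eq_mul, mem_Icc] at *
  refine ⟨⟨?_, ?_⟩, ⟨?_, ?_⟩, ?_, ?_⟩ <;> nlinarith

set_option maxHeartbeats 2000000 in
theorem stmt1 :
    convexHull ℝ setS = ⋂ l : ℝ × ℝ, convexHull ℝ (setAgg l) := by
  apply Subset.antisymm
  · refine subset_iInter fun l => convexHull_mono ?_
    rintro ⟨x, y1, y2⟩ ⟨hc, e1, e2⟩
    exact ⟨hc, by simp only [e1, e2]; ring⟩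
  · rintro ⟨x, y1, y2⟩ hp
    simp only [mem_iInter] at hp
    -- cube membership
    have hcube : (x, y1, y2) ∈ unitCube := by
      have h0 : setAgg (0, 0) ⊆ unitCube := fun q hq => hq.1
      have := convexHull_min h0 convex_unitCube (hp (0, 0))
      exact this
    obtain ⟨⟨hx0, hx1⟩, ⟨hy10, hy11⟩, hy20, hy21⟩ := hcube
    replace hx0 : (0:ℝ) ≤ x := hx0
    replace hx1 : x ≤ 1 := hx1
    replace hy10 : (0:ℝ) ≤ y1 := hy10
    replace hy11 : y1 ≤ 1 := hy11
    replace hy20 : (0:ℝ) ≤ y2 := hy20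
    replace hy21 : y2 ≤ 1 := hy21
    -- key inequality A : for t ∈ [0,1), (1-t)/2 ≤ x*(y1 - t*y2) and x > 0
    have hA : ∀ t : ℝ, 0 ≤ t → t < 1 →
        0 < x ∧ (1 - t)/2 ≤ x * (1 * y1 + (-t) * y2) := by
      intro t ht0 ht1
      have hsub : setAgg (1, -t) ⊆
          {q : ℝ × ℝ × ℝ | 0 < q.1 ∧ (1 - t)/2 ≤ q.1 * (1 * q.2.1 + (-t) * q.2.2)} := by
        rintro ⟨a, b1, b2⟩ ⟨⟨⟨ha0, ha1⟩, _⟩, he⟩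
        simp only [mem_setOf_eq] at he ⊢
        have heq : a * (1 * b1 + (-t) * b2) = (1 - t)/2 := by ring_nf; ring_nf at he; linarith
        have ha0' : (0:ℝ) ≤ a := ha0
        have hapos : 0 < a := by
          rcases lt_or_eq_of_le ha0' with h | h
          · exact h
          · exfalso; rw [← h] at heq; simp at heq; linarith
        exact ⟨hapos, heq.ge⟩
      exact convexHull_min hsub (convexK _ _ _ (by linarith)) (hp (1, -t))
    have hA' : ∀ t : ℝ, 0 ≤ t → t < 1 →
        0 < x ∧ (1 - t)/2 ≤ x * ((-t) * y1 + 1 * y2) := by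
      intro t ht0 ht1
      have hsub : setAgg (-t, 1) ⊆
          {q : ℝ × ℝ × ℝ | 0 < q.1 ∧ (1 - t)/2 ≤ q.1 * ((-t) * q.2.1 + 1 * q.2.2)} := by
        rintro ⟨a, b1, b2⟩ ⟨⟨⟨ha0, ha1⟩, _⟩, he⟩
        simp only [mem_setOf_eq] at he ⊢
        have heq : a * ((-t) * b1 + 1 * b2) = (1 - t)/2 := by ring_nf; ring_nf at he; linarith
        have ha0' : (0:ℝ) ≤ a := ha0
        have hapos : 0 < a := by
          rcases lt_or_eq_of_le ha0' with h | h
          · exact h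
          · exfalso; rw [← h] at heq; simp at heq; linarith
        exact ⟨hapos, heq.ge⟩
      exact convexHull_min hsub (convexK _ _ _ (by linarith)) (hp (-t, 1))
    -- chord inequality : x + y1 ≤ 3/2
    have hB : x + 1 * y1 + 0 * y2 ≤ 3/2 := by
      have hsub : setAgg (1, 0) ⊆
          {q : ℝ × ℝ × ℝ | q.1 + 1 * q.2.1 + 0 * q.2.2 ≤ 3/2} := by
        rintro ⟨a, b1, b2⟩ ⟨⟨⟨ha0, ha1⟩, ⟨hb0, hb1⟩, _⟩, he⟩
        simp only [mem_setOf_eq] at he ⊢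
        have heq : a * b1 = 1/2 := by linarith [he]
        have ha0' : (0:ℝ) ≤ a := ha0
        have ha1' : a ≤ 1 := ha1
        have hb0' : (0:ℝ) ≤ b1 := hb0
        have hb1' : b1 ≤ 1 := hb1
        have hapos : 0 < a := by
          rcases lt_or_eq_of_le ha0' with h | h
          · exact h
          · exfalso; rw [← h] at heq; simp at heq
        nlinarith [mul_nonneg (by nlinarith : (0:ℝ) ≤ 2*a - 1) (by linarith : (0:ℝ) ≤ 1 - a)]
      exact convexHull_min hsub (convexH _ _ _) (hp (1, 0))
    obtain ⟨hxpos, hxy1⟩ := hA 0 le_rfl one_pos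
    obtain ⟨_, hxy2⟩ := hA' 0 le_rfl one_pos
    simp only [one_mul, neg_zero, zero_mul, add_zero, zero_add, neg_mul] at hxy1 hxy2 hB
    -- x*y1 = x*y2
    have hle12 : x * y2 ≤ x * y1 := by
      by_contra h
      push_neg at h
      set e : ℝ := min 1 (x * y2 - x * y1) with he
      have he0 : 0 < e := lt_min one_pos (by linarith)
      have he1 : e ≤ 1 := min_le_left _ _
      have he2 : e ≤ x * y2 - x * y1 := min_le_right _ _
      rcases lt_or_eq_of_le he1 with h1 | h1
      · obtain ⟨_, key⟩ := hA (1 - e) (by linarith) (by linarith)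
        have hxy2le : x * y2 ≤ 1 := by nlinarith
        nlinarith
      · obtain ⟨_, key⟩ := hA (1 - e/2) (by linarith) (by linarith)
        have hxy2le : x * y2 ≤ 1 := by nlinarith
        nlinarith
    have hle21 : x * y1 ≤ x * y2 := by
      by_contra h
      push_neg at h
      set e : ℝ := min 1 (x * y1 - x * y2) with he
      have he0 : 0 < e := lt_min one_pos (by linarith)
      have he1 : e ≤ 1 := min_le_left _ _
      have he2 : e ≤ x * y1 - x * y2 := min_le_right _ _
      rcases lt_or_eq_of_le he1 with h1 | h1
      · obtain ⟨_, key⟩ := hA' (1 - e) (by linarith) (by linarith)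
        have hxy1le : x * y1 ≤ 1 := by nlinarith
        nlinarith
      · obtain ⟨_, key⟩ := hA' (1 - e/2) (by linarith) (by linarith)
        have hxy1le : x * y1 ≤ 1 := by nlinarith
        nlinarith
    have hyeq : y1 = y2 := by
      have := le_antisymm hle21 hle12
      exact mul_left_cancel₀ (ne_of_gt hxpos) this
    subst hyeq
    clear hp hA hA' hle12 hle21
    -- now build the convex combination
    have hxhalf : (1:ℝ)/2 ≤ x := by nlinarith [mul_le_of_le_one_right hx0 hy11]
    have h2xpos : (0:ℝ) < 2*x := by linarith
    have h1ge : (0:ℝ) ≤ 1/(2*x) := by positivity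
    have h1le : 1/(2*x) ≤ 1 := by rw [div_le_one h2xpos]; linarith
    have hprod : x * (1/(2*x)) = 1/2 := by
      field_simp
    have hq1 : (x, 1/(2*x), 1/(2*x)) ∈ setS :=
      ⟨⟨⟨hx0, hx1⟩, ⟨h1ge, h1le⟩, h1ge, h1le⟩, hprod, hprod⟩
    have hq2 : ((1:ℝ)/2, 1, 1) ∈ setS := by
      refine ⟨⟨⟨by norm_num, by norm_num⟩, ⟨by norm_num, by norm_num⟩, by norm_num, by norm_num⟩,
        by norm_num, by norm_num⟩
    have hq3 : ((1:ℝ), 1/2, 1/2) ∈ setS := by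
      refine ⟨⟨⟨by norm_num, by norm_num⟩, ⟨by norm_num, by norm_num⟩, by norm_num, by norm_num⟩,
        by norm_num, by norm_num⟩
    have hyge : 1/(2*x) ≤ y1 := by
      rw [div_le_iff₀ (by positivity)]
      nlinarith
    have hyle : y1 ≤ 3/2 - x := by linarith
    have hDnonneg : (0:ℝ) ≤ 3/2 - x - 1/(2*x) := by linarith
    rcases eq_or_lt_of_le hDnonneg with hD0 | hDpos
    · -- degenerate: p ∈ setS
      have hy : y1 = 1/(2*x) := by linarith
      rw [hy]
      exact subset_convexHull ℝ setS hq1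
    · have hθ0 : 0 ≤ (3/2 - x - y1)/(3/2 - x - 1/(2*x)) :=
        div_nonneg (by linarith) hDpos.le
      have hθ1 : (3/2 - x - y1)/(3/2 - x - 1/(2*x)) ≤ 1 := by
        rw [div_le_one hDpos]; linarith
      set θ : ℝ := (3/2 - x - y1)/(3/2 - x - 1/(2*x)) with hθ
      have hθD : θ * (3/2 - x - 1/(2*x)) = 3/2 - x - y1 :=
        div_mul_cancel₀ _ (ne_of_gt hDpos)
      set a : ℝ := 2*(1 - x) with ha
      have ha0 : 0 ≤ a := by rw [ha]; linarith
      have ha1 : 0 ≤ 1 - a := by rw [ha]; linarith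
      have h23 : a • ((1:ℝ)/2, (1:ℝ), (1:ℝ)) + (1 - a) • ((1:ℝ), (1:ℝ)/2, (1:ℝ)/2)
          ∈ convexHull ℝ setS :=
        (convex_convexHull ℝ setS) (subset_convexHull ℝ setS hq2)
          (subset_convexHull ℝ setS hq3) ha0 ha1 (by ring)
      have hfin : θ • ((x, 1/(2*x), 1/(2*x)) : ℝ × ℝ × ℝ) +
          (1 - θ) • (a • ((1:ℝ)/2, (1:ℝ), (1:ℝ)) + (1 - a) • ((1:ℝ), (1:ℝ)/2, (1:ℝ)/2))
          ∈ convexHull ℝ setS :=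
        (convex_convexHull ℝ setS) (subset_convexHull ℝ setS hq1) h23 hθ0
          (by linarith) (by ring)
      have heq : θ • ((x, 1/(2*x), 1/(2*x)) : ℝ × ℝ × ℝ) +
          (1 - θ) • (a • ((1:ℝ)/2, (1:ℝ), (1:ℝ)) + (1 - a) • ((1:ℝ), (1:ℝ)/2, (1:ℝ)/2))
          = (x, y1, y1) := by
        simp only [Prod.smul_mk, Prod.mk_add_mk, smul_eq_mul, Prod.mk.injEq]
        refine ⟨?_, ?_, ?_⟩
        · rw [ha]; ring
        · rw [ha]; linear_combination -hθD
        · rw [ha]; linear_combination -hθD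
      rw [← heq]
      exact hfin
end

section
/- For every finite set T ⊆ ℝ², the inclusion conv(S) ⊆ ⋂_{λ ∈ T} conv(S_λ) is strict; that is, there exists a point in ⋂_{λ ∈ T} conv(S_λ) that does not belong to conv(S). -/
open Set

-- common combination lemma
lemma comb_mem {s : Set (ℝ × ℝ × ℝ)} {q1 q2 p : ℝ × ℝ × ℝ} (hq1 : q1 ∈ s) (hq2 : q2 ∈ s)
    {θ : ℝ} (h0 : 0 ≤ θ) (h1 : θ ≤ 1)
    (hx : θ * q1.1 + (1-θ) * q2.1 = p.1)
    (hy : θ * q1.2.1 + (1-θ) * q2.2.1 = p.2.1)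
    (hz : θ * q1.2.2 + (1-θ) * q2.2.2 = p.2.2) :
    p ∈ convexHull ℝ s := by
  have : p ∈ segment ℝ q1 q2 := by
    refine ⟨θ, 1-θ, h0, by linarith, by ring, ?_⟩
    have : θ • q1 + (1-θ) • q2 =
        (θ * q1.1 + (1-θ) * q2.1, θ * q1.2.1 + (1-θ) * q2.2.1,
          θ * q1.2.2 + (1-θ) * q2.2.2) := rfl
    rw [this, hx, hy, hz]
  exact segment_subset_convexHull hq1 hq2 this

lemma aux_ne (a b δ θ : ℝ) (hδ : 0 < δ) (h36 : δ ≤ 1/36)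
    (hθ0 : 0 ≤ θ) (hθ2 : θ ≤ 1/2)
    (hkey : θ * ((a+b) + 6*(a*δ + b*(δ+δ^2))) = 9*(a*δ + b*(δ+δ^2))) :
    ((3/4:ℝ), (2/3+δ, 2/3+δ+δ^2)) ∈ convexHull ℝ (setAgg (a,b)) := by
  have h1θ : (0:ℝ) < 1 - θ := by linarith
  have hne : (1:ℝ) - θ ≠ 0 := ne_of_gt h1θ
  have hq1 : ((1/2:ℝ), (1:ℝ), (1:ℝ)) ∈ setAgg (a,b) := by
    refine ⟨⟨⟨by norm_num, by norm_num⟩, ⟨by norm_num, by norm_num⟩, ⟨by norm_num, by norm_num⟩⟩, ?_⟩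
    norm_num
  have hq2 : (((3/4 - θ/2)/(1-θ) : ℝ), ((2/3+δ-θ)/(1-θ) : ℝ), ((2/3+δ+δ^2-θ)/(1-θ) : ℝ)) ∈ setAgg (a,b) := by
    refine ⟨⟨⟨?_, ?_⟩, ⟨?_, ?_⟩, ⟨?_, ?_⟩⟩, ?_⟩
    · apply div_nonneg _ h1θ.le; linarith
    · rw [div_le_one h1θ]; linarith
    · apply div_nonneg _ h1θ.le; linarith
    · rw [div_le_one h1θ]; linarith
    · apply div_nonneg _ h1θ.le; nlinarith
    · rw [div_le_one h1θ]; nlinarith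
    · show a * ((3/4 - θ/2)/(1-θ) * ((2/3+δ-θ)/(1-θ)) - 1/2)
        + b * ((3/4 - θ/2)/(1-θ) * ((2/3+δ+δ^2-θ)/(1-θ)) - 1/2) = 0
      field_simp
      linear_combination (-(2:ℝ)) * hkey
  exact comb_mem hq1 hq2 hθ0 (by linarith) (by field_simp; ring) (by field_simp; ring)
    (by field_simp; ring)

lemma aux_zero (a b δ : ℝ) (hδ : 0 < δ) (h36 : δ ≤ 1/36) (hm : a + b = 0) :
    ((3/4:ℝ), (2/3+δ, 2/3+δ+δ^2)) ∈ convexHull ℝ (setAgg (a,b)) := by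
  have hd2 : (0:ℝ) < 1 - δ^2 := by nlinarith
  have hne : (1:ℝ) - δ^2 ≠ 0 := ne_of_gt hd2
  have hq1 : ((0:ℝ), (0:ℝ), (1:ℝ)) ∈ setAgg (a,b) := by
    refine ⟨⟨⟨by norm_num, by norm_num⟩, ⟨by norm_num, by norm_num⟩, ⟨by norm_num, by norm_num⟩⟩, ?_⟩
    show a * (0 * 0 - 1/2) + b * (0 * 1 - 1/2) = 0
    linear_combination (-(1:ℝ)/2) * hm
  have hq2 : (((3/4:ℝ)/(1-δ^2)), ((2/3+δ)/(1-δ^2) : ℝ), ((2/3+δ)/(1-δ^2) : ℝ)) ∈ setAgg (a,b) := by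
    refine ⟨⟨⟨?_, ?_⟩, ⟨?_, ?_⟩, ⟨?_, ?_⟩⟩, ?_⟩
    · positivity
    · rw [div_le_one hd2]; nlinarith
    · positivity
    · rw [div_le_one hd2]; nlinarith
    · positivity
    · rw [div_le_one hd2]; nlinarith
    · show a * ((3/4)/(1-δ^2) * ((2/3+δ)/(1-δ^2)) - 1/2)
        + b * ((3/4)/(1-δ^2) * ((2/3+δ)/(1-δ^2)) - 1/2) = 0
      field_simp
      linear_combination (6*δ + 8*δ^2 - 4*δ^4) * hm
  exact comb_mem (θ := δ^2) hq1 hq2 (by positivity) (by nlinarith) (by field_simp; ring)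
    (by field_simp; ring) (by field_simp; ring)

lemma mem_agg (a b δ : ℝ) (hδ : 0 < δ) (h36 : δ ≤ 1/36)
    (hb : a + b ≠ 0 → 2 * |b| * δ ≤ |a + b|) :
    ((3/4:ℝ), (2/3+δ, 2/3+δ+δ^2)) ∈ convexHull ℝ (setAgg (a,b)) := by
  by_cases hm : a + b = 0
  · exact aux_zero a b δ hδ h36 hm
  · have habs : |b*δ| ≤ |a+b|/2 := by
      rw [abs_mul, abs_of_pos hδ]; nlinarith [hb hm, abs_nonneg b]
    obtain ⟨hab1, hab2⟩ := abs_le.mp habs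
    have hD : a*δ + b*(δ+δ^2) = δ*((a+b)+b*δ) := by ring
    rcases lt_or_gt_of_ne hm with hneg | hpos
    · have hm' : |a+b| = -(a+b) := abs_of_neg hneg
      rw [hm'] at hab1 hab2
      have hDu : a*δ + b*(δ+δ^2) ≤ δ*(a+b)/2 := by rw [hD]; nlinarith
      have hDl : δ*(3*(a+b)/2) ≤ a*δ + b*(δ+δ^2) := by rw [hD]; nlinarith
      have hden : (a+b) + 6*(a*δ + b*(δ+δ^2)) < 0 := by nlinarith
      refine aux_ne a b δ (θ := 9*(a*δ + b*(δ+δ^2))/((a+b)+6*(a*δ + b*(δ+δ^2))))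
        hδ h36 ?_ ?_ ?_
      · exact div_nonneg_iff.mpr (Or.inr ⟨by nlinarith, hden.le⟩)
      · rw [div_le_iff_of_neg hden]; nlinarith
      · rw [div_mul_cancel₀ _ hden.ne]
    · have hm' : |a+b| = a+b := abs_of_pos hpos
      rw [hm'] at hab1 hab2
      have hDl : δ*(a+b)/2 ≤ a*δ + b*(δ+δ^2) := by rw [hD]; nlinarith
      have hDu : a*δ + b*(δ+δ^2) ≤ δ*(3*(a+b)/2) := by rw [hD]; nlinarith
      have hden : 0 < (a+b) + 6*(a*δ + b*(δ+δ^2)) := by nlinarith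
      refine aux_ne a b δ (θ := 9*(a*δ + b*(δ+δ^2))/((a+b)+6*(a*δ + b*(δ+δ^2))))
        hδ h36 ?_ ?_ ?_
      · apply div_nonneg _ hden.le; nlinarith
      · rw [div_le_iff₀ hden]; nlinarith
      · rw [div_mul_cancel₀ _ hden.ne']

theorem stmt2 (T : Set (ℝ × ℝ)) (hT : T.Finite) :
    convexHull ℝ setS ⊂ ⋂ l ∈ T, convexHull ℝ (setAgg l) := by
  have hsub : convexHull ℝ setS ⊆ ⋂ l ∈ T, convexHull ℝ (setAgg l) := by
    refine Set.subset_iInter₂ fun l _ => convexHull_mono fun p hp => ⟨hp.1, ?_⟩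
    rw [hp.2.1, hp.2.2]; ring
  rw [Set.ssubset_iff_of_subset hsub]
  -- choose δ
  set g : ℝ × ℝ → ℝ := fun l => if l.1 + l.2 = 0 ∨ l.2 = 0 then 1 else |l.1 + l.2| / (2 * |l.2|)
    with hg
  have hgpos : ∀ l : ℝ × ℝ, 0 < g l := by
    intro l
    rw [hg]
    by_cases h : l.1 + l.2 = 0 ∨ l.2 = 0
    · simp [h]
    · push_neg at h
      simp only [if_neg (not_or.mpr ⟨h.1, h.2⟩)]
      exact div_pos (abs_pos.mpr h.1) (mul_pos two_pos (abs_pos.mpr h.2))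
  set G : Finset (ℝ × ℝ) := insert ((1:ℝ), (0:ℝ)) hT.toFinset with hG
  have hGne : G.Nonempty := ⟨_, Finset.mem_insert_self _ _⟩
  set δ : ℝ := min (1/36) (G.inf' hGne g) with hδdef
  have hδpos : 0 < δ := lt_min (by norm_num) (by rw [Finset.lt_inf'_iff]; exact fun l _ => hgpos l)
  have h36 : δ ≤ 1/36 := min_le_left _ _
  refine ⟨((3/4:ℝ), (2/3+δ, 2/3+δ+δ^2)), ?_, ?_⟩
  · refine Set.mem_iInter₂.mpr fun l hl => ?_
    have hgl : δ ≤ g l := le_trans (min_le_right _ _)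
      (Finset.inf'_le g (Finset.mem_insert_of_mem (hT.mem_toFinset.mpr hl)))
    refine mem_agg l.1 l.2 δ hδpos h36 ?_
    intro hm
    by_cases hb0 : l.2 = 0
    · rw [hb0]; simp [abs_nonneg]
    · rw [hg] at hgl
      simp only [if_neg (not_or.mpr ⟨hm, hb0⟩)] at hgl
      have h2b : (0:ℝ) < 2 * |l.2| := by positivity
      rw [le_div_iff₀ h2b] at hgl
      linarith
  · intro hp
    have hplane : convexHull ℝ setS ⊆ {q : ℝ × ℝ × ℝ | q.2.1 = q.2.2} := by
      apply convexHull_min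
      · rintro q ⟨-, h1, h2⟩
        have hq1 : q.1 ≠ 0 := by
          intro h; rw [h] at h1; norm_num at h1
        exact mul_left_cancel₀ hq1 (h1.trans h2.symm)
      · intro x hx y hy u v hu hv huv
        have : (u • x + v • y).2.1 = u * x.2.1 + v * y.2.1 := rfl
        have h2 : (u • x + v • y).2.2 = u * x.2.2 + v * y.2.2 := rfl
        simp only [Set.mem_setOf_eq] at hx hy ⊢
        rw [this, h2, hx, hy]
    have := hplane hp
    simp only [Set.mem_setOf_eq] at this
    nlinarith
end

section
/- For every λ ∈ ℝ² there exists ε > 0 such that the point (3/4, 17/24 + ε, 17/24 − ε) belongs to conv(S_λ). -/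
open Set

theorem stmt5 (l : ℝ × ℝ) :
    ∃ ε : ℝ, 0 < ε ∧
      ((3/4 : ℝ), (17/24 + ε : ℝ), (17/24 - ε : ℝ)) ∈ convexHull ℝ (setAgg l) := by
  obtain ⟨μ, ν⟩ := l
  have hconv := convex_convexHull ℝ (setAgg (μ, ν))
  by_cases hd : μ + ν = 0
  · -- Case λ₁ + λ₂ = 0
    refine ⟨1/24, by norm_num, ?_⟩
    have hP : ((0:ℝ), (11/12:ℝ), (1/2:ℝ)) ∈ setAgg (μ, ν) := by
      constructor
      · refine ⟨⟨?_, ?_⟩, ⟨?_, ?_⟩, ?_, ?_⟩ <;> norm_num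
      · simp only; nlinarith [hd]
    have hQ : ((15/16:ℝ), (17/24:ℝ), (17/24:ℝ)) ∈ setAgg (μ, ν) := by
      constructor
      · refine ⟨⟨?_, ?_⟩, ⟨?_, ?_⟩, ?_, ?_⟩ <;> norm_num
      · simp only; nlinarith [hd]
    have h := hconv (subset_convexHull ℝ _ hP) (subset_convexHull ℝ _ hQ)
      (by norm_num : (0:ℝ) ≤ 1/5) (by norm_num : (0:ℝ) ≤ 4/5) (by norm_num)
    have heq : ((3/4 : ℝ), (17/24 + 1/24 : ℝ), (17/24 - 1/24 : ℝ))
        = (1/5 : ℝ) • ((0:ℝ), (11/12:ℝ), (1/2:ℝ))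
          + (4/5 : ℝ) • ((15/16:ℝ), (17/24:ℝ), (17/24:ℝ)) := by
      simp only [Prod.smul_mk, Prod.mk_add_mk, smul_eq_mul, Prod.mk.injEq]
      norm_num
    rw [heq]; exact h
  · -- Case λ₁ + λ₂ ≠ 0
    set q : ℝ := μ^2 + ν^2 with hqdef
    have hq : 0 < q := by
      rcases eq_or_ne μ 0 with h | h
      · have : ν ≠ 0 := by intro h2; exact hd (by rw [h, h2]; ring)
        positivity
      · positivity
    set τ : ℝ := (μ + ν) / (6 * q) with hτdef
    have hτμ1 : τ * μ ≤ 1/4 := by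
      rw [hτdef, div_mul_eq_mul_div, div_le_iff₀ (by positivity)]
      nlinarith [sq_nonneg (μ - ν), sq_nonneg (μ + ν), sq_nonneg μ, sq_nonneg ν]
    have hτμ2 : -(1/4) ≤ τ * μ := by
      rw [hτdef, div_mul_eq_mul_div, le_div_iff₀ (by positivity)]
      nlinarith [sq_nonneg (μ - ν), sq_nonneg (μ + ν), sq_nonneg μ, sq_nonneg ν]
    have hτν1 : τ * ν ≤ 1/4 := by
      rw [hτdef, div_mul_eq_mul_div, div_le_iff₀ (by positivity)]
      nlinarith [sq_nonneg (μ - ν), sq_nonneg (μ + ν), sq_nonneg μ, sq_nonneg ν]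
    have hτν2 : -(1/4) ≤ τ * ν := by
      rw [hτdef, div_mul_eq_mul_div, le_div_iff₀ (by positivity)]
      nlinarith [sq_nonneg (μ - ν), sq_nonneg (μ + ν), sq_nonneg μ, sq_nonneg ν]
    -- the asymmetric point E
    have hE : ((3/4 : ℝ), (2/3 + τ * ν : ℝ), (2/3 - τ * μ : ℝ)) ∈ setAgg (μ, ν) := by
      constructor
      · refine ⟨⟨by norm_num, by norm_num⟩, ⟨?_, ?_⟩, ?_, ?_⟩ <;> simp only <;> linarith
      · simp only; ring
    -- three points of S
    have hA : ((1/2 : ℝ), (1 : ℝ), (1 : ℝ)) ∈ setAgg (μ, ν) := by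
      constructor
      · refine ⟨⟨?_, ?_⟩, ⟨?_, ?_⟩, ?_, ?_⟩ <;> norm_num
      · simp only; ring_nf
    have hB : ((1 : ℝ), (1/2 : ℝ), (1/2 : ℝ)) ∈ setAgg (μ, ν) := by
      constructor
      · refine ⟨⟨?_, ?_⟩, ⟨?_, ?_⟩, ?_, ?_⟩ <;> norm_num
      · simp only; ring_nf
    have hC : ((3/4 : ℝ), (2/3 : ℝ), (2/3 : ℝ)) ∈ setAgg (μ, ν) := by
      constructor
      · refine ⟨⟨?_, ?_⟩, ⟨?_, ?_⟩, ?_, ?_⟩ <;> norm_num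
      · simp only; ring_nf
    set u : ℝ := τ * (ν - μ) with hudef
    have hu1 : u ≤ 1/2 := by rw [hudef]; nlinarith
    have hu2 : -(1/2) ≤ u := by rw [hudef]; nlinarith
    -- convex combination
    have hN := hconv (subset_convexHull ℝ _ hA) (subset_convexHull ℝ _ hB)
      (by norm_num : (0:ℝ) ≤ 1/2) (by norm_num : (0:ℝ) ≤ 1/2) (by norm_num)
    have hM := hconv (subset_convexHull ℝ _ hC) hN
      (by linarith : (0:ℝ) ≤ (49 + 6*u)/99) (by linarith : (0:ℝ) ≤ (50 - 6*u)/99)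
      (by ring)
    have hT := hconv hM (subset_convexHull ℝ _ hE)
      (by norm_num : (0:ℝ) ≤ 99/100) (by norm_num : (0:ℝ) ≤ 1/100) (by norm_num)
    refine ⟨(μ + ν)^2 / (1200 * q), by positivity, ?_⟩
    have heq : ((3/4 : ℝ), (17/24 + (μ + ν)^2 / (1200 * q) : ℝ),
          (17/24 - (μ + ν)^2 / (1200 * q) : ℝ))
        = (99/100 : ℝ) • (((49 + 6*u)/99 : ℝ) • ((3/4 : ℝ), (2/3 : ℝ), (2/3 : ℝ))
            + ((50 - 6*u)/99 : ℝ) • ((1/2:ℝ) • ((1/2 : ℝ), (1 : ℝ), (1 : ℝ))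
              + (1/2:ℝ) • ((1 : ℝ), (1/2 : ℝ), (1/2 : ℝ))))
          + (1/100 : ℝ) • ((3/4 : ℝ), (2/3 + τ * ν : ℝ), (2/3 - τ * μ : ℝ)) := by
      simp only [Prod.smul_mk, Prod.mk_add_mk, smul_eq_mul, Prod.mk.injEq, hudef, hτdef]
      refine ⟨by ring, ?_, ?_⟩ <;> field_simp <;> ring
    rw [heq]; exact hT
end

section
/- ⋂_{λ ∈ ℝ²} conv(S_λ) ⊆ {(x, y1, y2) ∈ [0,1]³ : x·(y1 + y2) ≥ 1}. -/
open Set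

/-- Auxiliary convex superset of `S_{(1,1)}`. -/
def auxC : Set (ℝ × ℝ × ℝ) :=
  {p | p.1 ∈ Icc (0:ℝ) 1 ∧ p.2.1 ∈ Icc (0:ℝ) 1 ∧ p.2.2 ∈ Icc (0:ℝ) 1 ∧
    0 < p.1 ∧ 1 ≤ p.1 * (p.2.1 + p.2.2)}

lemma hyper_key (x1 s1 x2 s2 a b : ℝ) (hx1 : 0 < x1) (hx2 : 0 < x2)
    (h1 : 1 ≤ x1 * s1) (h2 : 1 ≤ x2 * s2)
    (ha : 0 ≤ a) (hb : 0 ≤ b) (hab : a + b = 1) :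
    1 ≤ (a * x1 + b * x2) * (a * s1 + b * s2) := by
  have hs1 : 0 < s1 := by nlinarith
  have hs2 : 0 < s2 := by nlinarith
  have key : 2 ≤ x1 * s2 + x2 * s1 := by
    nlinarith [sq_nonneg (x1 * s2 - x2 * s1), mul_pos hx1 hs2, mul_pos hx2 hs1,
      mul_pos (mul_pos hx1 hs2) (mul_pos hx2 hs1)]
  nlinarith [mul_nonneg (mul_nonneg ha hb) (le_trans (by norm_num : (0:ℝ) ≤ 2) key),
    sq_nonneg a, sq_nonneg b, mul_nonneg ha hb]

lemma auxC_convex : Convex ℝ auxC := by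
  rintro p ⟨⟨hp1, hp2⟩, ⟨hp3, hp4⟩, ⟨hp5, hp6⟩, hpx, hpk⟩
    q ⟨⟨hq1, hq2⟩, ⟨hq3, hq4⟩, ⟨hq5, hq6⟩, hqx, hqk⟩ a b ha hb hab
  have hx : 0 < a * p.1 + b * q.1 := by
    rcases eq_or_lt_of_le ha with h | h
    · have hb1 : b = 1 := by linarith
      simpa [← h, hb1] using hqx
    · nlinarith
  have hmain : 1 ≤ (a * p.1 + b * q.1) * (a * p.2.1 + b * q.2.1 + (a * p.2.2 + b * q.2.2)) := by
    have := hyper_key p.1 (p.2.1 + p.2.2) q.1 (q.2.1 + q.2.2) a b hpx hqx hpk hqk ha hb hab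
    nlinarith [this]
  have e1 : (a • p + b • q).1 = a * p.1 + b * q.1 := rfl
  have e2 : (a • p + b • q).2.1 = a * p.2.1 + b * q.2.1 := rfl
  have e3 : (a • p + b • q).2.2 = a * p.2.2 + b * q.2.2 := rfl
  refine ⟨⟨?_, ?_⟩, ⟨?_, ?_⟩, ⟨?_, ?_⟩, ?_, ?_⟩ <;> simp only [e1, e2, e3]
  · positivity
  · nlinarith
  · positivity
  · nlinarith
  · positivity
  · nlinarith
  · exact hx
  · exact hmain

theorem stmt6 :
    (⋂ l : ℝ × ℝ, convexHull ℝ (setAgg l)) ⊆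
      {p ∈ unitCube | p.1 * (p.2.1 + p.2.2) ≥ 1} := by
  intro p hp
  have hp11 : p ∈ convexHull ℝ (setAgg (1, 1)) := by
    exact mem_iInter.mp hp (1, 1)
  have hsub : setAgg (1, 1) ⊆ auxC := by
    rintro q ⟨⟨hq1, hq2, hq3⟩, heq⟩
    have heq' : q.1 * (q.2.1 + q.2.2) = 1 := by ring_nf at heq ⊢; linarith
    have hx : 0 < q.1 := by
      rcases lt_or_eq_of_le hq1.1 with h | h
      · exact h
      · exfalso; rw [← h] at heq'; simp at heq'
    exact ⟨hq1, hq2, hq3, hx, heq'.ge⟩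
  have := convexHull_min hsub auxC_convex hp11
  obtain ⟨h1, h2, h3, _, h5⟩ := this
  exact ⟨⟨h1, h2, h3⟩, h5⟩
end

section
/- ⋂_{λ ∈ ℝ²} conv(S_λ) ⊆ {(x, y1, y2) ∈ [0,1]³ : y1 = y2}. -/
open Set

/-- The region above the hyperbola `x·u = 1/2` (with `u` a linear functional) is convex. -/
lemma convexC (t : ℝ) :
    Convex ℝ {p : ℝ × ℝ × ℝ | 0 < p.1 ∧ 1/2 ≤ p.1 * (t * p.2.1 + (1-t) * p.2.2)} := by
  rintro p ⟨hp1, hp2⟩ q ⟨hq1, hq2⟩ a b ha hb hab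
  have hx : (0:ℝ) < a * p.1 + b * q.1 := by
    rcases lt_or_eq_of_le ha with ha' | ha'
    · have : 0 ≤ b * q.1 := mul_nonneg hb hq1.le
      nlinarith [mul_pos ha' hp1]
    · have hb' : b = 1 := by linarith
      simp [← ha', hb']; exact hq1
  constructor
  · simpa [Prod.smul_def, smul_eq_mul] using hx
  · have hup : 0 < t * p.2.1 + (1-t) * p.2.2 := by nlinarith
    have huq : 0 < t * q.2.1 + (1-t) * q.2.2 := by nlinarith
    have key : p.1 * (t * q.2.1 + (1-t) * q.2.2) + q.1 * (t * p.2.1 + (1-t) * p.2.2) ≥ 1 := by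
      nlinarith [sq_nonneg (p.1 * (t * q.2.1 + (1-t) * q.2.2) - q.1 * (t * p.2.1 + (1-t) * p.2.2)),
        mul_pos hp1 huq, mul_pos hq1 hup, mul_pos (mul_pos hp1 huq) (mul_pos hq1 hup)]
    show (1:ℝ)/2 ≤ (a • p + b • q).1 * (t * (a • p + b • q).2.1 + (1-t) * (a • p + b • q).2.2)
    simp only [Prod.smul_def, Prod.fst_add, Prod.snd_add, Prod.fst_mul, smul_eq_mul,
      Prod.smul_fst, Prod.smul_snd, Prod.fst, Prod.snd]
    have key' : 0 ≤ p.1 * (t * q.2.1 + (1-t) * q.2.2) + q.1 * (t * p.2.1 + (1-t) * p.2.2) - 1 := by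
      linarith
    have hp2' : 0 ≤ p.1 * (t * p.2.1 + (1-t) * p.2.2) - 1/2 := by linarith
    have hq2' : 0 ≤ q.1 * (t * q.2.1 + (1-t) * q.2.2) - 1/2 := by linarith
    nlinarith [sq_nonneg (a - b), mul_nonneg (mul_nonneg ha hb) key',
      mul_nonneg (mul_nonneg ha ha) hp2', mul_nonneg (mul_nonneg hb hb) hq2']

lemma aggSubC (t : ℝ) :
    setAgg (t, 1-t) ⊆ {p : ℝ × ℝ × ℝ | 0 < p.1 ∧ 1/2 ≤ p.1 * (t * p.2.1 + (1-t) * p.2.2)} := by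
  rintro p ⟨hc, he⟩
  have heq : p.1 * (t * p.2.1 + (1-t) * p.2.2) = 1/2 := by
    have := he
    simp only [setAgg] at this ⊢
    ring_nf at this ⊢
    linarith
  have hx : 0 < p.1 := by
    rcases lt_or_eq_of_le hc.1.1 with h | h
    · exact h
    · exfalso; rw [← h] at heq; simp at heq
  exact ⟨hx, le_of_eq heq.symm⟩

theorem stmt7 :
    (⋂ l : ℝ × ℝ, convexHull ℝ (setAgg l)) ⊆
      {p ∈ unitCube | p.2.1 = p.2.2} := by
  intro p hp
  simp only [mem_iInter] at hp
  have hcube : p ∈ unitCube := by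
    have h0 := hp (1, 0)
    have hsub : setAgg (1, 0) ⊆ unitCube := fun q hq => hq.1
    have hconv : Convex ℝ unitCube := by
      rintro x ⟨hx1, hx2, hx3⟩ y ⟨hy1, hy2, hy3⟩ a b ha hb hab
      exact ⟨convex_Icc (0:ℝ) 1 hx1 hy1 ha hb hab,
             convex_Icc (0:ℝ) 1 hx2 hy2 ha hb hab,
             convex_Icc (0:ℝ) 1 hx3 hy3 ha hb hab⟩
    exact convexHull_min hsub hconv h0
  have key : ∀ t : ℝ, 0 < p.1 ∧ 1/2 ≤ p.1 * (t * p.2.1 + (1-t) * p.2.2) := by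
    intro t
    exact convexHull_min (aggSubC t) (convexC t) (hp (t, 1-t))
  have hx : 0 < p.1 := (key 0).1
  refine ⟨hcube, ?_⟩
  by_contra hne
  have hd : p.1 * (p.2.1 - p.2.2) ≠ 0 := by
    intro h
    rcases mul_eq_zero.1 h with h' | h'
    · exact hx.ne' h'
    · exact hne (by linarith)
  set d := p.1 * (p.2.1 - p.2.2) with hdd
  have hgen : ∀ t : ℝ, 1/2 ≤ p.1 * p.2.2 + t * d := by
    intro t
    have h2 := (key t).2
    have h3 : p.1 * (t * p.2.1 + (1-t) * p.2.2) = p.1 * p.2.2 + t * (p.1 * (p.2.1 - p.2.2)) := by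
      ring
    rw [hdd]
    linarith
  have h1 := hgen ((1/2 - p.1 * p.2.2 - 1) / d)
  rw [div_mul_cancel₀ _ hd] at h1
  linarith
end

section
/- ⋂_{λ ∈ ℝ²} conv(S_λ) ⊆ {(x, y1, y2) ∈ [0,1]³ : x + y1 ≤ 3/2}. -/
open Set

lemma convT : Convex ℝ {p : ℝ × ℝ × ℝ | p ∈ unitCube ∧ p.1 + p.2.1 ≤ 3/2} := by
  intro p hp q hq a b ha hb hab
  obtain ⟨⟨⟨hp1, hp1'⟩, ⟨hp2, hp2'⟩, ⟨hp3, hp3'⟩⟩, hp4⟩ := hp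
  obtain ⟨⟨⟨hq1, hq1'⟩, ⟨hq2, hq2'⟩, ⟨hq3, hq3'⟩⟩, hq4⟩ := hq
  simp only [unitCube, mem_Icc, mem_setOf_eq, Prod.smul_fst, Prod.smul_snd, Prod.fst_add,
    Prod.snd_add, smul_eq_mul]
  refine ⟨⟨⟨?_, ?_⟩, ⟨?_, ?_⟩, ⟨?_, ?_⟩⟩, ?_⟩ <;> nlinarith

theorem stmt8 :
    (⋂ l : ℝ × ℝ, convexHull ℝ (setAgg l)) ⊆
      {p ∈ unitCube | p.1 + p.2.1 ≤ 3/2} := by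
  intro p hp
  have h1 : p ∈ convexHull ℝ (setAgg (1, 0)) := mem_iInter.mp hp (1, 0)
  have hsub : setAgg (1, 0) ⊆ {p : ℝ × ℝ × ℝ | p ∈ unitCube ∧ p.1 + p.2.1 ≤ 3/2} := by
    rintro q ⟨hq, heq⟩
    obtain ⟨⟨hq1, hq1'⟩, ⟨hq2, hq2'⟩, _⟩ := id hq
    refine ⟨hq, ?_⟩
    have hxy : q.1 * q.2.1 = 1/2 := by linarith [heq]
    nlinarith [mul_nonneg (sub_nonneg.2 hq1') (sub_nonneg.2 hq2')]
  exact convexHull_min hsub convT h1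
end

section
/- conv(S) = {(x, y1, y2) ∈ [0,1]³ : x·(y1 + y2) ≥ 1, x + y1 ≤ 3/2, and y1 = y2}. -/
open Set

lemma stmt9_aux (a b x1 y1 x2 y2 : ℝ) (hab : a + b = 1)
    (e1 : 0 ≤ a^2 * (2*x1*y1 - 1)) (e2 : 0 ≤ b^2 * (2*x2*y2 - 1))
    (e3 : 0 ≤ (a*b) * (x1*y2 + x2*y1 - 1)) :
    (a * x1 + b * x2) * (a * y1 + b * y2 + (a * y1 + b * y2)) ≥ 1 := by
  nlinarith [e1, e2, e3, sq_nonneg (a + b)]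

set_option maxHeartbeats 1000000 in
theorem stmt9 :
    convexHull ℝ setS =
      {p ∈ unitCube | p.1 * (p.2.1 + p.2.2) ≥ 1 ∧ p.1 + p.2.1 ≤ 3/2 ∧ p.2.1 = p.2.2} := by
  apply Subset.antisymm
  · apply convexHull_min
    · rintro ⟨x, y1, y2⟩ ⟨⟨hx, hy1, hy2⟩, h1, h2⟩
      simp only [unitCube, mem_Icc, Set.mem_setOf_eq] at hx hy1 hy2 ⊢
      refine ⟨⟨hx, hy1, hy2⟩, by nlinarith, by nlinarith [hx.1, hx.2, hy1.1, hy1.2], ?_⟩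
      have hx0 : x ≠ 0 := by intro h; rw [h] at h1; norm_num at h1
      have : x * y1 = x * y2 := by rw [h1, h2]
      exact mul_left_cancel₀ hx0 this
    · rintro ⟨x1, y1, z1⟩ ⟨⟨hx1, hy1, hz1⟩, h11, h12, h13⟩ ⟨x2, y2, z2⟩
        ⟨⟨hx2, hy2, hz2⟩, h21, h22, h23⟩ a b ha hb hab
      simp only [unitCube, mem_Icc, Set.mem_setOf_eq, Prod.smul_mk, Prod.mk_add_mk,
        smul_eq_mul] at *
      refine ⟨⟨⟨by nlinarith, by nlinarith⟩, ⟨by nlinarith, by nlinarith⟩,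
        ⟨by nlinarith, by nlinarith⟩⟩, ?_, by nlinarith, by rw [h13, h23]⟩
      subst h13; subst h23
      have h4 : (x1 * y1) * (x2 * y2) ≥ 1/4 := by nlinarith [h11, h21]
      have hS : 0 ≤ x1 * y2 + x2 * y1 :=
        add_nonneg (mul_nonneg hx1.1 hy2.1) (mul_nonneg hx2.1 hy1.1)
      have hcross : x1 * y2 + x2 * y1 ≥ 1 := by
        nlinarith [sq_nonneg (x1 * y2 - x2 * y1), h4, hS]
      have e1 : 0 ≤ a^2 * (2*x1*y1 - 1) := mul_nonneg (sq_nonneg a) (by linarith)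
      have e2 : 0 ≤ b^2 * (2*x2*y2 - 1) := mul_nonneg (sq_nonneg b) (by linarith)
      have e3 : 0 ≤ (a*b) * (x1*y2 + x2*y1 - 1) :=
        mul_nonneg (mul_nonneg ha hb) (by linarith)
      exact stmt9_aux a b x1 y1 x2 y2 hab e1 e2 e3
  · rintro ⟨x, y1, y2⟩ ⟨⟨hx, hy1, hy2⟩, h1, h2, h3⟩
    simp only [unitCube, mem_Icc, Set.mem_setOf_eq] at hx hy1 hy2 h1 h2 h3
    subst h3
    set c : ℝ := x + y1 with hc
    have hxy : x * y1 ≥ 1/2 := by nlinarith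
    have hc2 : c ^ 2 ≥ 2 := by nlinarith [sq_nonneg (x - y1)]
    have hc32 : c ≤ 3/2 := h2
    have hc1 : c ≥ 5/4 := by nlinarith [hx.1, hy1.1]
    set d : ℝ := Real.sqrt (c ^ 2 - 2) with hdd
    have hd0 : 0 ≤ d := Real.sqrt_nonneg _
    have hd2 : d ^ 2 = c ^ 2 - 2 := Real.sq_sqrt (by linarith)
    have hdc1 : d ≤ c - 1 := by nlinarith
    have hdc2 : d ≤ 2 - c := by nlinarith
    have hdxy : x - y1 ≤ d := by nlinarith
    have hdyx : y1 - x ≤ d := by nlinarith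
    have hA : ((c - d)/2, (c + d)/2, (c + d)/2) ∈ setS := by
      refine ⟨⟨⟨by nlinarith, by nlinarith⟩, ⟨by nlinarith, by nlinarith⟩,
        ⟨by nlinarith, by nlinarith⟩⟩, by nlinarith, by nlinarith⟩
    have hB : ((c + d)/2, (c - d)/2, (c - d)/2) ∈ setS := by
      refine ⟨⟨⟨by nlinarith, by nlinarith⟩, ⟨by nlinarith, by nlinarith⟩,
        ⟨by nlinarith, by nlinarith⟩⟩, by nlinarith, by nlinarith⟩
    rcases eq_or_lt_of_le hd0 with heq | hdpos
    · apply subset_convexHull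
      have hd0' : d = 0 := heq.symm
      have hceq : c ^ 2 = 2 := by nlinarith [hd2, hd0']
      have hxeq : x = y1 := by nlinarith [sq_nonneg (x - y1), hceq, h1, hc]
      refine ⟨⟨hx, hy1, hy1⟩, ?_, ?_⟩ <;> show x * y1 = 1/2 <;>
        nlinarith [hceq, hxeq, hc]
    · set t : ℝ := ((c + d)/2 - x) / d with ht
      set s : ℝ := (x - (c - d)/2) / d with hs
      have htn : 0 ≤ t := by
        apply div_nonneg _ (le_of_lt hdpos); linarith
      have hsn : 0 ≤ s := by
        apply div_nonneg _ (le_of_lt hdpos); linarith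
      have hts : t + s = 1 := by
        rw [ht, hs]; field_simp; ring
      have key := (convex_convexHull ℝ setS) (subset_convexHull ℝ setS hA)
        (subset_convexHull ℝ setS hB) htn hsn hts
      have heqp : ((x : ℝ), y1, y1) =
          t • (((c - d)/2 : ℝ), (c + d)/2, (c + d)/2) +
          s • (((c + d)/2 : ℝ), (c - d)/2, (c - d)/2) := by
        have hdne : d ≠ 0 := ne_of_gt hdpos
        simp only [Prod.smul_mk, Prod.mk_add_mk, smul_eq_mul, Prod.mk.injEq, ht, hs, hc]
        refine ⟨?_, ?_, ?_⟩ <;> field_simp <;> ring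
      rw [heqp]
      exact key
end

section
/- Let (x̂, ŷ1, ŷ2) ∈ [0,1]³ satisfy x̂·(ŷ1 + ŷ2) ≥ 1, x̂ + ŷ1 ≤ 3/2, ŷ1 = ŷ2, x̂ > 1/2, and ŷ1 < 1. Set x̃ = (x̂ − 1/2)/(1 − ŷ1), ỹ = (1 − ŷ1)/(2·x̂ − 1), and μ = (2·x̂·ŷ1 − 1)/(2·x̂ + ŷ1 − 2). Then (x̃, ỹ, ỹ) ∈ S, 0 ≤ μ ≤ 1, and (x̂, ŷ1, ŷ2) = μ·(1/2, 1, 1) + (1 − μ)·(x̃, ỹ, ỹ). -/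
open Set

theorem stmt19 (xh y1h y2h xt yt μ : ℝ)
    (hbox : (xh, y1h, y2h) ∈ unitCube)
    (h1 : xh * (y1h + y2h) ≥ 1) (h2 : xh + y1h ≤ 3/2) (h3 : y1h = y2h)
    (h4 : 1/2 < xh) (h5 : y1h < 1)
    (hxt : xt = (xh - 1/2) / (1 - y1h))
    (hyt : yt = (1 - y1h) / (2 * xh - 1))
    (hμ : μ = (2 * xh * y1h - 1) / (2 * xh + y1h - 2)) :
    (xt, yt, yt) ∈ setS ∧ 0 ≤ μ ∧ μ ≤ 1 ∧
    (xh, y1h, y2h) = μ • ((1/2 : ℝ), (1 : ℝ), (1 : ℝ)) + (1 - μ) • (xt, yt, yt) := by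
  obtain ⟨⟨hx0, hx1⟩, ⟨hy10, hy11⟩, hy20, hy21⟩ := hbox
  subst h3
  have ha : (0:ℝ) < 1 - y1h := by linarith
  have hb : (0:ℝ) < 2 * xh - 1 := by linarith
  have hnum : 0 ≤ 2 * xh * y1h - 1 := by nlinarith
  have hd : 0 < 2 * xh + y1h - 2 := by nlinarith [sq_nonneg (2*xh-1)]
  subst hxt hyt hμ
  refine ⟨⟨⟨⟨?_, ?_⟩, ⟨?_, ?_⟩, ⟨?_, ?_⟩⟩, ?_, ?_⟩, ?_, ?_, ?_⟩
  · exact div_nonneg (by linarith) ha.le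
  · rw [div_le_one ha]; linarith
  · exact div_nonneg ha.le hb.le
  · rw [div_le_one hb]; nlinarith [sq_nonneg (2*xh-1)]
  · exact div_nonneg ha.le hb.le
  · rw [div_le_one hb]; nlinarith [sq_nonneg (2*xh-1)]
  · field_simp [show xh * 2 - 1 ≠ 0 by linarith]
  · field_simp [show xh * 2 - 1 ≠ 0 by linarith]
  · exact div_nonneg hnum hd.le
  · rw [div_le_one hd]; nlinarith
  · simp only [Prod.smul_mk, smul_eq_mul, Prod.mk_add_mk, Prod.mk.injEq]
    refine ⟨?_, ?_, ?_⟩ <;> field_simp [show xh * 2 + y1h - 2 ≠ 0 by linarith] <;> ring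
end
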